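/- Every point s ∈ S that is not a vertex of K is the orthogonal projection of the origin onto the affine hull of a set of vertices of K: letting I = { v ∈ V : ⟨v, s⟩ = ‖s‖² }, the point s lies in the affine hull of I and ⟨v − s, s⟩ = 0 for all v ∈ I, so s is the unique point of minimal Euclidean norm in the affine hull of I. -/

import Mathlib

open scoped RealInnerProductSpace BigOperators Classical
open Filter Metric

noncomputable section

/-- The hardmax attention (argmax) index set `C_i` for a token configuration `z`
(attention matrix `A = I`): the set of indices `j` maximizing `⟪z_i, z_j⟫`. -/
def attn {d n : ℕ} (z : Fin n → EuclideanSpace ℝ (Fin d)) (i : Fin n) : Finset (Fin n) :=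
  Finset.univ.filter fun j => (⟪z i, z j⟫ = ⨆ ℓ, ⟪z i, z ℓ⟫)

/-- The pure-attention hardmax transformer dynamics with step-size `α > 0` and `A = I`:
`z_i^{k+1} = z_i^k + (α/(1+α))·(1/|C_i^k|)·Σ_{j ∈ C_i^k} (z_j^k − z_i^k)`. -/
def IsDyn {d n : ℕ} (α : ℝ) (z : ℕ → Fin n → EuclideanSpace ℝ (Fin d)) : Prop :=
  ∀ k i, z (k + 1) i = z k i +
    (α / (1 + α)) • (((attn (z k) i).card : ℝ)⁻¹ • ∑ j ∈ attn (z k) i, (z k j - z k i))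

/-- The limiting set `K = ⋂ₖ co(Z^k)`, the intersection of the convex hulls of the token
configurations over all times. -/
def limitK {d n : ℕ} (z : ℕ → Fin n → EuclideanSpace ℝ (Fin d)) :
    Set (EuclideanSpace ℝ (Fin d)) :=
  ⋂ k, convexHull ℝ (Set.range (z k))

/-- The cluster set `S = { x ∈ K : max_{v ∈ V} ⟪v − x, x⟫ = 0 }`, where `V` is the set of
extreme points (vertices) of `K`; `max … = 0` is phrased as: `0` is the greatest element of
the set of values `⟪v − x, x⟫`, `v ∈ V`. -/
def clusterSet {d : ℕ} (K : Set (EuclideanSpace ℝ (Fin d))) :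
    Set (EuclideanSpace ℝ (Fin d)) :=
  {x ∈ K | IsGreatest ((fun v => ⟪v - x, x⟫) '' (Set.extremePoints ℝ K)) 0}

/-- Every non-vertex point `s ∈ S` is the orthogonal projection of the origin onto the affine
hull of the set `I = { v ∈ V : ⟪v, s⟫ = ‖s‖² }` of vertices: `s` lies in the affine hull of
`I`, `⟪v − s, s⟫ = 0` for all `v ∈ I`, and `s` is the unique point of minimal norm there. -/
theorem nonvertex_cluster_is_projection {d n : ℕ} (hd : 0 < d) (hn : 0 < n) (α : ℝ) (hα : 0 < α)
    (z : ℕ → Fin n → EuclideanSpace ℝ (Fin d)) (hdyn : IsDyn α z)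
    (hdist : ∀ i j : Fin n, i ≠ j → z 0 i ≠ z 0 j) (hnz : ∀ i, z 0 i ≠ 0)
    (s : EuclideanSpace ℝ (Fin d)) (hs : s ∈ clusterSet (limitK z))
    (hsv : s ∉ Set.extremePoints ℝ (limitK z)) :
    let I : Set (EuclideanSpace ℝ (Fin d)) :=
      {v ∈ Set.extremePoints ℝ (limitK z) | ⟪v, s⟫ = ‖s‖ ^ 2}
    s ∈ affineSpan ℝ I ∧ (∀ v ∈ I, ⟪v - s, s⟫ = (0 : ℝ)) ∧
      ∀ y ∈ affineSpan ℝ I, y ≠ s → ‖s‖ < ‖y‖ := by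
  intro I
  obtain ⟨hsK, hgr⟩ := hs
  set K : Set (EuclideanSpace ℝ (Fin d)) := limitK z with hK
  -- K is compact and convex
  have hKclosed : IsClosed K :=
    isClosed_iInter fun k => (Set.finite_range (z k)).isClosed_convexHull ℝ
  have hKcomp : IsCompact K :=
    ((Set.finite_range (z 0)).isCompact_convexHull ℝ).of_isClosed_subset hKclosed
      (Set.iInter_subset _ 0)
  have hKconv : Convex ℝ K := convex_iInter fun k => convex_convexHull ℝ _
  -- the bound on extreme points
  have hle : ∀ v ∈ Set.extremePoints ℝ K, ⟪v, s⟫ ≤ ‖s‖ ^ 2 := by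
    intro v hv
    have := hgr.2 ⟨v, hv, rfl⟩
    have hss : ⟪s, s⟫ = ‖s‖ ^ 2 := real_inner_self_eq_norm_sq s
    simp only [inner_sub_left] at this
    linarith
  -- the bound extends to all of K
  have hboundK : ∀ x ∈ K, ⟪x, s⟫ ≤ ‖s‖ ^ 2 := by
    intro x hx
    have hCcl : IsClosed {w : EuclideanSpace ℝ (Fin d) | ⟪w, s⟫ ≤ ‖s‖ ^ 2} :=
      isClosed_le (Continuous.inner continuous_id continuous_const) continuous_const
    have hCconv : Convex ℝ {w : EuclideanSpace ℝ (Fin d) | ⟪w, s⟫ ≤ ‖s‖ ^ 2} :=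
      convex_halfSpace_le
        ⟨fun a b => inner_add_left a b s, fun c a => real_inner_smul_left a s c⟩ _
    have hxcl : x ∈ closure (convexHull ℝ (Set.extremePoints ℝ K)) := by
      rw [closure_convexHull_extremePoints hKcomp hKconv]; exact hx
    exact closure_minimal (convexHull_min hle hCconv) hCcl hxcl
  -- the exposed face F
  set l : EuclideanSpace ℝ (Fin d) →L[ℝ] ℝ := innerSL ℝ s with hl
  have hls : ∀ x, l x = ⟪x, s⟫ := fun x => by
    simp only [hl, innerSL_apply_apply]; exact real_inner_comm x s
  set F : Set (EuclideanSpace ℝ (Fin d)) := l.toExposed K with hF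
  have hexp : IsExposed ℝ K F := ContinuousLinearMap.toExposed.isExposed
  have hsF : s ∈ F := by
    refine ⟨hsK, fun y hy => ?_⟩
    rw [hls y, hls s, real_inner_self_eq_norm_sq]
    exact hboundK y hy
  have hFchar : ∀ x, x ∈ F → ⟪x, s⟫ = ‖s‖ ^ 2 := by
    intro x hx
    have h1 := hx.2 s hsK
    rw [hls s, hls x, real_inner_self_eq_norm_sq] at h1
    exact le_antisymm (hboundK x hx.1) h1
  have hFcomp : IsCompact F := hexp.isCompact hKcomp
  have hFconv : Convex ℝ F := hexp.convex hKconv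
  have hextF : Set.extremePoints ℝ F ⊆ I := by
    intro v hv
    exact ⟨hexp.isExtreme.extremePoints_subset_extremePoints hv,
      hFchar v (extremePoints_subset hv)⟩
  -- first conclusion
  have h1 : s ∈ affineSpan ℝ I := by
    have hsp : IsClosed (affineSpan ℝ I : Set (EuclideanSpace ℝ (Fin d))) :=
      (affineSpan ℝ I).closed_of_finiteDimensional
    have hsub : convexHull ℝ (Set.extremePoints ℝ F) ⊆
        (affineSpan ℝ I : Set (EuclideanSpace ℝ (Fin d))) :=
      convexHull_min (hextF.trans (subset_affineSpan ℝ I)) (affineSpan ℝ I).convex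
    have : s ∈ closure (convexHull ℝ (Set.extremePoints ℝ F)) := by
      rw [closure_convexHull_extremePoints hFcomp hFconv]; exact hsF
    exact closure_minimal hsub hsp this
  refine ⟨h1, ?_, ?_⟩
  · intro v hv
    rw [inner_sub_left, hv.2, real_inner_self_eq_norm_sq]
    ring
  · -- the affine subspace {x | ⟪x, s⟫ = ‖s‖²}
    intro y hy hne
    have hQ : ⟪y, s⟫ = ‖s‖ ^ 2 := by
      let Q : AffineSubspace ℝ (EuclideanSpace ℝ (Fin d)) :=
        { carrier := {x | ⟪x, s⟫ = ‖s‖ ^ 2}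
          smul_vsub_vadd_mem' := by
            intro c p₁ p₂ p₃ h₁ h₂ h₃
            simp only [Set.mem_setOf_eq] at *
            have hrw : (c • (p₁ -ᵥ p₂) +ᵥ p₃ : EuclideanSpace ℝ (Fin d))
                = c • (p₁ - p₂) + p₃ := rfl
            rw [hrw, inner_add_left, real_inner_smul_left, inner_sub_left, h₁, h₂, h₃]
            ring }
      have hIQ : affineSpan ℝ I ≤ Q := affineSpan_le.2 fun v hv => hv.2
      exact hIQ hy
    have hys : ⟪y - s, s⟫ = (0 : ℝ) := by
      rw [inner_sub_left, hQ, real_inner_self_eq_norm_sq]; ring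
    have hnorm : ‖y‖ ^ 2 = ‖y - s‖ ^ 2 + ‖s‖ ^ 2 := by
      have h := norm_add_sq_real (y - s) s
      rw [show y - s + s = y from by abel, hys] at h
      linarith
    have hpos : 0 < ‖y - s‖ ^ 2 :=
      pow_pos (norm_pos_iff.2 (sub_ne_zero.2 hne)) 2
    have : ‖s‖ ^ 2 < ‖y‖ ^ 2 := by linarith
    exact lt_of_pow_lt_pow_left₀ 2 (norm_nonneg y) this

end
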